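/- For nonnegative integer n, define P_k(x,y) = prod_{j=0}^{k-1}(x - y q^j). Then sum_{k=0}^n [n choose k]_q (ax;q)_k (b;q)_k P_{n-k}(x,y) (-ab)^{n-k} q^{binom(n,2)-binom(k,2)} = (ay;q)_n * sum_{k=0}^n [n choose k]_q * ((ax;q)_{n-k} / (ay;q)_{n-k}) * (-b)^k q^{binom(k,2)}. -/

import Mathlib

open Finset

/-- The q-Pochhammer symbol `(a; q)_n = ∏_{j=0}^{n-1} (1 - a q^j)`. -/
noncomputable def qPoch (a q : ℂ) (n : ℕ) : ℂ := ∏ j ∈ Finset.range n, (1 - a * q ^ j)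

/-- The Gaussian binomial coefficient `[n choose k]_q`. -/
noncomputable def qBinom (q : ℂ) (n k : ℕ) : ℂ :=
  qPoch q q n / (qPoch q q k * qPoch q q (n - k))

/-- `P_k(x,y) = (x - y)(x - yq) ⋯ (x - y q^{k-1})`. -/
noncomputable def P (q x y : ℂ) (k : ℕ) : ℂ := ∏ j ∈ Finset.range k, (x - y * q ^ j)


noncomputable def B (q : ℂ) : ℕ → ℕ → ℂ
  | _, 0 => 1
  | 0, _+1 => 0
  | n+1, k+1 => B q n k + q^(k+1) * B q n (k+1)

lemma B_zero (q : ℂ) (n : ℕ) : B q n 0 = 1 := by cases n <;> rfl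

lemma B_succ (q : ℂ) (n k : ℕ) : B q (n+1) (k+1) = B q n k + q^(k+1) * B q n (k+1) := rfl

lemma B_of_lt (q : ℂ) : ∀ {n k : ℕ}, n < k → B q n k = 0 := by
  intro n
  induction n with
  | zero => intro k h; match k, h with | k+1, _ => rfl
  | succ n ih =>
    intro k h
    match k, h with
    | k+1, h =>
      rw [B_succ, ih (by omega), ih (by omega)]
      ring

lemma B_diag (q : ℂ) (n : ℕ) : B q n n = 1 := by
  induction n with
  | zero => rfl
  | succ n ih => rw [B_succ, ih, B_of_lt q (by omega)]; ring

lemma qPoch_succ (a q : ℂ) (n : ℕ) : qPoch a q (n+1) = qPoch a q n * (1 - a * q ^ n) :=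
  prod_range_succ _ _

lemma qPoch_succ' (a q : ℂ) (n : ℕ) : qPoch a q (n+1) = (1 - a) * qPoch (a*q) q n := by
  rw [qPoch, prod_range_succ']
  simp only [pow_zero, mul_one, qPoch]
  rw [mul_comm]
  congr 1
  apply prod_congr rfl
  intro j _
  ring

lemma qPoch_add (a q : ℂ) (m n : ℕ) :
    qPoch a q (m + n) = qPoch a q m * qPoch (a * q ^ m) q n := by
  rw [qPoch, prod_range_add]
  congr 1
  apply prod_congr rfl
  intro j _
  rw [pow_add]
  ring

lemma P_succ (q x y : ℂ) (k : ℕ) : P q x y (k+1) = P q x y k * (x - y * q ^ k) :=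
  prod_range_succ _ _

-- key product identity, no nonvanishing needed
lemma B_mul_poch (q : ℂ) : ∀ n k : ℕ, k ≤ n →
    B q n k * (qPoch q q k * qPoch q q (n - k)) = qPoch q q n := by
  intro n
  induction n with
  | zero => intro k hk; interval_cases k; simp [B_zero, qPoch]
  | succ n ih =>
    intro k hk
    match k with
    | 0 => simp [B_zero, qPoch]
    | j+1 =>
      rcases Nat.lt_or_ge j n with hj | hj
      · have h1 : n + 1 - (j + 1) = (n - (j+1)) + 1 := by omega
        have h2 : n - j = (n - (j+1)) + 1 := by omega
        rw [B_succ, h1, qPoch_succ q q (j), qPoch_succ q q (n - (j+1)), add_mul]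
        have e1 := ih j (by omega)
        have e2 := ih (j+1) (by omega)
        rw [h2, qPoch_succ q q (n - (j+1))] at e1
        have key : B q n j * (qPoch q q j * (1 - q * q ^ j)) *
            (qPoch q q (n - (j + 1)) * (1 - q * q ^ (n - (j + 1)))) +
            q ^ (j + 1) * B q n (j+1) * (qPoch q q j * (1 - q * q ^ j)) *
            (qPoch q q (n - (j + 1)) * (1 - q * q ^ (n - (j + 1)))) =
            qPoch q q n * (1 - q * q ^ n) := by
          have r1 : B q n j * (qPoch q q j * (qPoch q q (n - (j+1)) * (1 - q * q ^ (n - (j+1)))))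
              = qPoch q q n := e1
          have r2 : B q n (j+1) * ((qPoch q q j * (1 - q * q ^ j)) * qPoch q q (n - (j+1)))
              = qPoch q q n := by rw [← qPoch_succ]; exact e2
          have hexp : q ^ (j+1) * (q * q ^ (n - (j+1))) = q * q ^ n := by
            rw [← pow_succ', ← pow_succ', ← pow_add]
            congr 1
            omega
          calc B q n j * (qPoch q q j * (1 - q * q ^ j)) *
                (qPoch q q (n - (j + 1)) * (1 - q * q ^ (n - (j + 1)))) +
              q ^ (j + 1) * B q n (j+1) * (qPoch q q j * (1 - q * q ^ j)) *
                (qPoch q q (n - (j + 1)) * (1 - q * q ^ (n - (j + 1))))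
              = (B q n j * (qPoch q q j * (qPoch q q (n - (j+1)) * (1 - q * q ^ (n - (j+1)))))) * (1 - q*q^j)
                + (B q n (j+1) * ((qPoch q q j * (1 - q * q ^ j)) * qPoch q q (n - (j+1)))) *
                  (q^(j+1) - q ^ (j+1) * (q * q ^ (n - (j+1)))) := by ring
            _ = qPoch q q n * (1 - q*q^j) + qPoch q q n * (q^(j+1) - q * q^n) := by rw [r1, r2, hexp]
            _ = qPoch q q n * (1 - q * q ^ n) := by rw [← pow_succ']; ring
        rw [qPoch_succ q q n, ← key]
        ring
      · have hjn : j = n := by omega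
        subst hjn
        rw [B_succ, B_diag, B_of_lt q (by omega)]
        simp [qPoch]

section nz
variable {q : ℂ} (hq : ‖q‖ < 1)

include hq in
lemma qPoch_q_ne_zero (n : ℕ) : qPoch q q n ≠ 0 := by
  rw [qPoch]
  apply prod_ne_zero_iff.2
  intro j _
  intro h
  have h1 : q * q ^ j = 1 := by
    have := sub_eq_zero.mp h
    linear_combination -this
  have : ‖q * q ^ j‖ < 1 := by
    rw [norm_mul, norm_pow]
    calc ‖q‖ * ‖q‖ ^ j ≤ ‖q‖ * 1 := by
          apply mul_le_mul_of_nonneg_left _ (norm_nonneg _)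
          exact pow_le_one₀ (norm_nonneg _) hq.le
      _ < 1 := by rwa [mul_one]
  rw [h1] at this
  simp at this

include hq in
lemma qBinom_eq_B {n k : ℕ} (hk : k ≤ n) : qBinom q n k = B q n k := by
  rw [qBinom, ← B_mul_poch q n k hk]
  field_simp [qPoch_q_ne_zero hq]

include hq in
lemma B_symm {n k : ℕ} (hk : k ≤ n) : B q n (n - k) = B q n k := by
  have h1 := B_mul_poch q n (n-k) (by omega)
  have h2 := B_mul_poch q n k hk
  have h3 : n - (n - k) = k := by omega
  rw [h3] at h1
  have hne : qPoch q q (n-k) * qPoch q q k ≠ 0 :=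
    mul_ne_zero (qPoch_q_ne_zero hq _) (qPoch_q_ne_zero hq _)
  have h4 := h1.trans h2.symm
  apply mul_right_cancel₀ hne
  linear_combination h4

include hq in
lemma B_tri {n k i : ℕ} (h : k + i ≤ n) :
    B q n k * B q (n-k) i = B q n (k+i) * B q (k+i) k := by
  have e1 := B_mul_poch q n k (by omega)
  have e2 := B_mul_poch q (n-k) i (by omega)
  have e3 := B_mul_poch q n (k+i) h
  have e4 := B_mul_poch q (k+i) k (by omega)
  have h1 : n - k - i = n - (k+i) := by omega
  have h2 : k + i - k = i := by omega
  rw [h1] at e2; rw [h2] at e4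
  have hne : ∀ m : ℕ, qPoch q q m ≠ 0 := qPoch_q_ne_zero hq
  have hP : qPoch q q k * qPoch q q i * qPoch q q (n - (k+i)) ≠ 0 :=
    mul_ne_zero (mul_ne_zero (hne _) (hne _)) (hne _)
  apply mul_right_cancel₀ hP
  calc B q n k * B q (n-k) i * (qPoch q q k * qPoch q q i * qPoch q q (n - (k+i)))
      = (B q n k * (qPoch q q k * qPoch q q (n - k))) *
        (B q (n-k) i * (qPoch q q i * qPoch q q (n - (k+i)))) / qPoch q q (n-k) := by
        field_simp [hne]
    _ = qPoch q q n * qPoch q q (n-k) / qPoch q q (n-k) := by rw [e1, e2]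
    _ = qPoch q q n := by field_simp [hne]
    _ = (B q n (k+i) * (qPoch q q (k+i) * qPoch q q (n - (k+i)))) *
        (B q (k+i) k * (qPoch q q k * qPoch q q i)) / qPoch q q (k+i) := by
        rw [e3, e4]; field_simp [hne]
    _ = B q n (k+i) * B q (k+i) k * (qPoch q q k * qPoch q q i * qPoch q q (n - (k+i))) := by
        field_simp [hne]

end nz

-- q-binomial theorem
lemma qbinom_thm (q : ℂ) : ∀ (l : ℕ) (b : ℂ),
    qPoch b q l = ∑ k ∈ range (l+1), B q l k * q ^ (k.choose 2) * (-b) ^ k := by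
  intro l
  induction l with
  | zero => intro b; simp [qPoch, B_zero]
  | succ l ih =>
    intro b
    rw [qPoch_succ', ih (b*q)]
    rw [Finset.sum_range_succ' _ (l+1)]
    have h0 : B q (l+1) 0 * q ^ (Nat.choose 0 2) * (-b) ^ 0 = 1 := by
      simp [B_zero]
    rw [h0]
    simp only [B_succ]
    have step : ∀ k ∈ range (l+1),
        (B q l k + q^(k+1) * B q l (k+1)) * q ^ ((k+1).choose 2) * (-b)^(k+1)
        = (-b) * (B q l k * q ^ (k.choose 2) * (-(b*q))^k)
          + (q^(k+1) * B q l (k+1) * q ^ ((k+1).choose 2) * (-b)^(k+1)) := by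
      intro k _
      have hch : (k+1).choose 2 = k.choose 2 + k := by
        rw [Nat.choose_succ_succ]
        simp [Nat.choose_one_right]
        omega
      rw [hch]
      rw [pow_add, neg_mul, neg_pow (b*q), mul_pow]
      ring
    rw [Finset.sum_congr rfl step, Finset.sum_add_distrib, ← Finset.mul_sum]
    have shift : (∑ k ∈ range (l+1), q^(k+1) * B q l (k+1) * q ^ ((k+1).choose 2) * (-b)^(k+1)) + 1
        = ∑ k ∈ range (l+1), B q l k * q ^ (k.choose 2) * (-(b*q))^k := by
      have h00 : (1:ℂ) = q^0 * B q l 0 * q^(Nat.choose 0 2) * (-b)^0 := by simp [B_zero]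
      rw [h00, ← Finset.sum_range_succ' (fun k => q^k * B q l k * q^(k.choose 2) * (-b)^k) (l+1)]
      rw [Finset.sum_range_succ, B_of_lt q (by omega)]
      simp only [mul_zero, zero_mul, add_zero]
      apply Finset.sum_congr rfl
      intro k _
      rw [show (-(b*q)) = (-b)*q by ring, mul_pow]
      ring
    linear_combination -shift

-- choose 2 helpers
lemma choose2_succ (m : ℕ) : (m+1).choose 2 = m.choose 2 + m := by
  rw [Nat.choose_succ_succ]
  simp [Nat.choose_one_right]
  omega

lemma choose2_add (x y : ℕ) : (x+y).choose 2 = x.choose 2 + x*y + y.choose 2 := by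
  induction y with
  | zero => simp
  | succ y ih =>
    rw [show x + (y+1) = (x+y)+1 by omega, choose2_succ, ih, choose2_succ]
    ring

lemma choose2_mono {k n : ℕ} (h : k ≤ n) : k.choose 2 ≤ n.choose 2 := by
  have := choose2_add k (n-k)
  rw [show k + (n-k) = n by omega] at this
  omega

-- the (star) lemma
lemma star (q : ℂ) : ∀ (m : ℕ) (u v : ℂ),
    ∑ i ∈ range (m+1), B q m i * qPoch u q i * P q u v (m - i) = qPoch v q m := by
  intro m
  induction m with
  | zero => intro u v; simp [B_zero, qPoch, P]
  | succ m ih =>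
    intro u v
    rw [Finset.sum_range_succ' _ (m+1)]
    have h0 : B q (m+1) 0 * qPoch u q 0 * P q u v (m+1-0) = P q u v (m+1) := by
      simp [B_zero, qPoch]
    rw [h0]
    simp only [B_succ]
    have step : ∀ i ∈ range (m+1),
        (B q m i + q^(i+1) * B q m (i+1)) * qPoch u q (i+1) * P q u v (m+1-(i+1))
        = B q m i * qPoch u q i * P q u v (m-i) * (1 - u * q^i)
          + q^(i+1) * B q m (i+1) * qPoch u q (i+1) * P q u v (m-i) := by
      intro i hi
      rw [show m+1-(i+1) = m - i by omega, qPoch_succ]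
      ring
    rw [Finset.sum_congr rfl step, Finset.sum_add_distrib]
    have shift : (∑ i ∈ range (m+1), q^(i+1) * B q m (i+1) * qPoch u q (i+1) * P q u v (m-i))
          + P q u v (m+1)
        = ∑ i ∈ range (m+1), q^i * B q m i * qPoch u q i * P q u v ((m+1)-i) := by
      have e : ∀ i ∈ range (m+1), q^(i+1) * B q m (i+1) * qPoch u q (i+1) * P q u v (m-i)
          = (fun j => q^j * B q m j * qPoch u q j * P q u v ((m+1)-j)) (i+1) := by
        intro i _
        simp only
        rw [show m+1-(i+1) = m-i by omega]
      have h00 : P q u v (m+1)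
          = (fun j => q^j * B q m j * qPoch u q j * P q u v ((m+1)-j)) 0 := by
        simp [B_zero, qPoch]
      rw [Finset.sum_congr rfl e, h00, ← Finset.sum_range_succ'
          (fun j => q ^ j * B q m j * qPoch u q j * P q u v (m + 1 - j)) (m+1),
        Finset.sum_range_succ, B_of_lt q (by omega)]
      simp only [mul_zero, zero_mul, add_zero]
    have expand : ∀ i ∈ range (m+1),
        q^i * B q m i * qPoch u q i * P q u v ((m+1)-i)
        = B q m i * qPoch u q i * P q u v (m-i) * (q^i * u - v * q^m) := by
      intro i hi
      rw [mem_range] at hi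
      rw [show m+1-i = (m-i)+1 by omega, P_succ]
      have hpow : q^i * q^(m-i) = q^m := by
        rw [← pow_add]
        congr 1
        omega
      linear_combination (-(B q m i * qPoch u q i * P q u v (m-i) * v)) * hpow
    rw [add_assoc, shift, Finset.sum_congr rfl expand, ← Finset.sum_add_distrib]
    have comb : ∀ i ∈ range (m+1),
        B q m i * qPoch u q i * P q u v (m-i) * (1 - u * q^i)
          + B q m i * qPoch u q i * P q u v (m-i) * (q^i * u - v * q^m)
        = (B q m i * qPoch u q i * P q u v (m-i)) * (1 - v*q^m) := by
      intro i _
      ring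
    rw [Finset.sum_congr rfl comb, ← Finset.sum_mul, ih, ← qPoch_succ]

lemma sum_tri (n : ℕ) (f : ℕ → ℕ → ℂ) :
    ∑ k ∈ range (n+1), ∑ i ∈ range (n-k+1), f k (k+i)
    = ∑ l ∈ range (n+1), ∑ k ∈ range (l+1), f k l := by
  rw [Finset.sum_sigma', Finset.sum_sigma']
  apply Finset.sum_nbij' (i := fun p => ⟨p.1 + p.2, p.1⟩) (j := fun p => ⟨p.2, p.1 - p.2⟩)
  · intro p hp
    simp only [mem_sigma, mem_range] at hp ⊢
    omega
  · intro p hp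
    simp only [mem_sigma, mem_range] at hp ⊢
    omega
  · intro p hp
    simp only [mem_sigma, mem_range] at hp
    obtain ⟨p1, p2⟩ := p
    simp only [Sigma.mk.inj_iff, heq_eq_eq]
    dsimp only at hp ⊢
    exact ⟨trivial, by omega⟩
  · intro p hp
    simp only [mem_sigma, mem_range] at hp
    obtain ⟨p1, p2⟩ := p
    simp only [Sigma.mk.inj_iff, heq_eq_eq]
    dsimp only at hp ⊢
    exact ⟨by omega, trivial⟩
  · intro p hp
    rfl

lemma P_scale (q x y c : ℂ) (m : ℕ) : P q (c*x) (c*y) m = c^m * P q x y m := by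
  rw [P, P]
  have : ∀ j ∈ range m, c*x - c*y*q^j = c * (x - y*q^j) := by intro j _; ring
  rw [Finset.prod_congr rfl this, Finset.prod_mul_distrib, Finset.prod_const, card_range]

set_option maxHeartbeats 2000000 in
theorem carlitz_P_identity (n : ℕ) (a b x y q : ℂ) (hq : ‖q‖ < 1)
    (hay : ∀ j < n, a * y * q ^ j ≠ 1) :
    ∑ k ∈ range (n + 1),
        qBinom q n k * qPoch (a * x) q k * qPoch b q k * P q x y (n - k)
          * (-(a * b)) ^ (n - k) * q ^ (n.choose 2 - k.choose 2)
      = qPoch (a * y) q n *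
          ∑ k ∈ range (n + 1),
            qBinom q n k * (qPoch (a * x) q (n - k) / qPoch (a * y) q (n - k))
              * (-b) ^ k * q ^ (k.choose 2) := by
  have hayk : ∀ k : ℕ, k ≤ n → qPoch (a*y) q k ≠ 0 := by
    intro k hk
    rw [qPoch]
    refine prod_ne_zero_iff.2 (fun j hj h => ?_)
    exact hay j (lt_of_lt_of_le (mem_range.mp hj) hk) (sub_eq_zero.mp h).symm
  symm
  calc qPoch (a*y) q n * ∑ k ∈ range (n+1),
          qBinom q n k * (qPoch (a*x) q (n-k) / qPoch (a*y) q (n-k)) * (-b)^k * q^(k.choose 2)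
      = ∑ k ∈ range (n+1), qPoch (a*y) q n *
          (qBinom q n (n-k) * (qPoch (a*x) q (n-(n-k)) / qPoch (a*y) q (n-(n-k)))
            * (-b)^(n-k) * q^((n-k).choose 2)) := by
        rw [← Finset.sum_range_reflect (fun k => qBinom q n k *
          (qPoch (a*x) q (n-k) / qPoch (a*y) q (n-k)) * (-b)^k * q^(k.choose 2)) (n+1),
          Finset.mul_sum]
        simp only [Nat.add_sub_cancel]
    _ = ∑ k ∈ range (n+1), ∑ i ∈ range (n-k+1),
          B q n k * B q (n-k) i * (qPoch (a*x) q k * qPoch ((a*x)*q^k) q i)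
            * P q ((a*x)*q^k) ((a*y)*q^k) ((n-k)-i) * (-b)^(n-k) * q^((n-k).choose 2) := by
        apply Finset.sum_congr rfl
        intro k hk
        rw [mem_range] at hk
        have hk' : k ≤ n := by omega
        rw [show n-(n-k) = k by omega, qBinom_eq_B hq (by omega : n-k ≤ n), B_symm hq hk']
        have hsplit : qPoch (a*y) q n = qPoch (a*y) q k * qPoch ((a*y)*q^k) q (n-k) := by
          have h := qPoch_add (a*y) q k (n-k)
          rwa [show k+(n-k) = n by omega] at h
        have hstar := star q (n-k) ((a*x)*q^k) ((a*y)*q^k)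
        have hterm : qPoch (a*y) q n * (B q n k * (qPoch (a*x) q k / qPoch (a*y) q k)
              * (-b)^(n-k) * q^((n-k).choose 2))
            = B q n k * qPoch (a*x) q k * qPoch ((a*y)*q^k) q (n-k)
              * (-b)^(n-k) * q^((n-k).choose 2) := by
          rw [hsplit]
          field_simp [hayk k hk']
        rw [hterm, ← hstar, Finset.mul_sum, Finset.sum_mul, Finset.sum_mul]
        apply Finset.sum_congr rfl
        intro i _
        ring
    _ = ∑ k ∈ range (n+1), ∑ i ∈ range (n-k+1),
          (fun k l => B q n l * B q l k * qPoch (a*x) q l * (a^(n-l) * q^(k*(n-l)))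
            * P q x y (n-l) * ((-b)^(n-l) * (-b)^(l-k)) * q^((n-k).choose 2)) k (k+i) := by
        apply Finset.sum_congr rfl
        intro k hk
        rw [mem_range] at hk
        apply Finset.sum_congr rfl
        intro i hi
        rw [mem_range] at hi
        simp only
        rw [B_tri hq (by omega : k + i ≤ n), ← qPoch_add (a*x) q k i,
          show (a*x)*q^k = (a*q^k)*x by ring, show (a*y)*q^k = (a*q^k)*y by ring,
          P_scale, show (n-k)-i = n-(k+i) by omega]
        have hb : (-b : ℂ)^(n-k) = (-b)^(n-(k+i)) * (-b)^(k+i-k) := by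
          rw [← pow_add]
          congr 1
          omega
        have ha : (a*q^k : ℂ)^(n-(k+i)) = a^(n-(k+i)) * q^(k*(n-(k+i))) := by
          rw [mul_pow, ← pow_mul]
        rw [hb, ha]
        ring
    _ = ∑ l ∈ range (n+1), ∑ k ∈ range (l+1),
          B q n l * B q l k * qPoch (a*x) q l * (a^(n-l) * q^(k*(n-l)))
            * P q x y (n-l) * ((-b)^(n-l) * (-b)^(l-k)) * q^((n-k).choose 2) :=
        sum_tri n (fun k l => B q n l * B q l k * qPoch (a*x) q l * (a^(n-l) * q^(k*(n-l)))
            * P q x y (n-l) * ((-b)^(n-l) * (-b)^(l-k)) * q^((n-k).choose 2))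
    _ = ∑ l ∈ range (n+1),
          qBinom q n l * qPoch (a*x) q l * qPoch b q l * P q x y (n-l)
            * (-(a*b))^(n-l) * q^(n.choose 2 - l.choose 2) := by
        apply Finset.sum_congr rfl
        intro l hl
        rw [mem_range] at hl
        have hl' : l ≤ n := by omega
        have inner : ∑ k ∈ range (l+1),
              B q l k * ((-b)^(l-k) * (q^(k*(n-l)) * q^((n-k).choose 2)))
            = qPoch b q l * q^(n.choose 2 - l.choose 2) := by
          rw [← Finset.sum_range_reflect (fun k => B q l k *
            ((-b)^(l-k) * (q^(k*(n-l)) * q^((n-k).choose 2)))) (l+1)]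
          simp only [Nat.add_sub_cancel]
          rw [qbinom_thm q l b, Finset.sum_mul]
          apply Finset.sum_congr rfl
          intro k hk
          rw [mem_range] at hk
          have hkl : k ≤ l := by omega
          rw [B_symm hq hkl, show l-(l-k) = k by omega]
          have hle := choose2_mono (show l ≤ n from hl')
          have e3 : n.choose 2 = l.choose 2 + l*(n-l) + (n-l).choose 2 := by
            rw [← choose2_add l (n-l)]
            congr 1
            omega
          have e2 : (n-(l-k)).choose 2 = (n-l).choose 2 + (n-l)*k + k.choose 2 := by
            rw [← choose2_add (n-l) k]
            congr 1
            omega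
          have e4 : (l-k)*(n-l) + k*(n-l) = l*(n-l) := by
            rw [← Nat.add_mul, Nat.sub_add_cancel hkl]
          have e5 : (n-l)*k = k*(n-l) := Nat.mul_comm _ _
          have hexp : (l-k)*(n-l) + (n-(l-k)).choose 2
              = k.choose 2 + (n.choose 2 - l.choose 2) := by
            rw [e2]
            omega
          have hq2 : q^((l-k)*(n-l)) * q^((n-(l-k)).choose 2)
              = q^(k.choose 2) * q^(n.choose 2 - l.choose 2) := by
            rw [← pow_add, ← pow_add, hexp]
          linear_combination B q l k * (-b)^k * hq2
        calc ∑ k ∈ range (l+1),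
              B q n l * B q l k * qPoch (a*x) q l * (a^(n-l) * q^(k*(n-l)))
                * P q x y (n-l) * ((-b)^(n-l) * (-b)^(l-k)) * q^((n-k).choose 2)
            = (B q n l * qPoch (a*x) q l * a^(n-l) * P q x y (n-l) * (-b)^(n-l)) *
              ∑ k ∈ range (l+1),
                B q l k * ((-b)^(l-k) * (q^(k*(n-l)) * q^((n-k).choose 2))) := by
              rw [Finset.mul_sum]
              apply Finset.sum_congr rfl
              intro k _
              ring
          _ = qBinom q n l * qPoch (a*x) q l * qPoch b q l * P q x y (n-l)
                * (-(a*b))^(n-l) * q^(n.choose 2 - l.choose 2) := by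
              rw [inner, qBinom_eq_B hq hl', show -(a*b) = a * (-b) by ring, mul_pow]
              ring
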